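/- In an independent uncertainty model, a matching μ is stable with probability 1 if and only if there is no unmatched pair (m,w) such that it is not the case that m certainly prefers μ(m) to w and it is not the case that w certainly prefers μ(w) to m (i.e., μ admits no very weakly blocking pair). -/

import Mathlib

open Finset
open scoped Classical BigOperators

/-- A strict preference order over `Fin n`, encoded as a rank bijection:
`P a < P b` means the agent prefers `a` to `b`. -/
abbrev Pref (n : ℕ) := Equiv.Perm (Fin n)

/-- The pair `(m, w)` blocks the matching `μ` under profile `(PM, PW)`. -/
def blocks {n : ℕ} (μ : Equiv.Perm (Fin n)) (PM PW : Fin n → Pref n) (m w : Fin n) : Prop :=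
  μ m ≠ w ∧ PM m w < PM m (μ m) ∧ PW w m < PW w (μ.symm w)

/-- `μ` is stable under the profile `(PM, PW)`. -/
def stable {n : ℕ} (μ : Equiv.Perm (Fin n)) (PM PW : Fin n → Pref n) : Prop :=
  ∀ m w, ¬ blocks μ PM PW m w

/-- `p` is a probability distribution over preference orders. -/
def isDist {n : ℕ} (p : Pref n → ℝ) : Prop := (∀ P, 0 ≤ p P) ∧ ∑ P, p P = 1

/-- Stability probability of `μ` in the independent (lottery-style) model where each
man `i` draws from `pM i` and each woman `i` draws from `pW i`, independently. -/
noncomputable def stabProb {n : ℕ} (pM pW : Fin n → Pref n → ℝ) (μ : Equiv.Perm (Fin n)) : ℝ :=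
  ∑ PM : Fin n → Pref n, ∑ PW : Fin n → Pref n,
    if stable μ PM PW then (∏ i, pM i (PM i)) * (∏ i, pW i (PW i)) else 0

/-- Agent with distribution `p` certainly prefers `a` to `b` (prefers with probability 1). -/
def certPrefers {n : ℕ} (p : Pref n → ℝ) (a b : Fin n) : Prop :=
  ∑ P ∈ Finset.univ.filter (fun P : Pref n => P a < P b), p P = 1

/-- Characterization of certain preference: every order with positive probability
ranks `a` above `b`. -/
lemma certPrefers_iff {n : ℕ} (p : Pref n → ℝ) (hp : isDist p) (a b : Fin n) :
    certPrefers p a b ↔ ∀ P : Pref n, p P ≠ 0 → P a < P b := by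
  obtain ⟨hp0, hp1⟩ := hp
  unfold certPrefers
  rw [← hp1]
  rw [← Finset.sum_filter_add_sum_filter_not Finset.univ (fun P : Pref n => P a < P b) p]
  constructor
  · intro h P hP
    by_contra hlt
    have hz : ∑ P ∈ Finset.univ.filter (fun P : Pref n => ¬ P a < P b), p P = 0 := by
      linarith
    have := (Finset.sum_eq_zero_iff_of_nonneg (fun P _ => hp0 P)).mp hz P (by
      simp only [Finset.mem_filter, Finset.mem_univ, true_and]; exact hlt)
    exact hP this
  · intro h
    have hz : ∑ P ∈ Finset.univ.filter (fun P : Pref n => ¬ P a < P b), p P = 0 := by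
      apply Finset.sum_eq_zero
      intro P hPmem
      simp only [Finset.mem_filter, Finset.mem_univ, true_and] at hPmem
      by_contra hne
      exact hPmem (h P hne)
    rw [hz, add_zero]

/-- In an independent uncertainty model, `μ` is stable with probability 1
iff there is no unmatched pair `(m, w)` that very weakly blocks `μ`, i.e. such that
`m` does not certainly prefer `μ(m)` to `w` and `w` does not certainly prefer `μ(w)` to `m`. -/
theorem statement1 {n : ℕ} (pM pW : Fin n → Pref n → ℝ)
    (hM : ∀ i, isDist (pM i)) (hW : ∀ i, isDist (pW i)) (μ : Equiv.Perm (Fin n)) :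
    stabProb pM pW μ = 1 ↔
      ¬ ∃ m w : Fin n, μ m ≠ w ∧
        ¬ certPrefers (pM m) (μ m) w ∧ ¬ certPrefers (pW w) (μ.symm w) m := by
  -- weights
  set wM : (Fin n → Pref n) → ℝ := fun PM => ∏ i, pM i (PM i) with hwM
  set wW : (Fin n → Pref n) → ℝ := fun PW => ∏ i, pW i (PW i) with hwW
  have hwMnn : ∀ PM, 0 ≤ wM PM := fun PM => Finset.prod_nonneg (fun i _ => (hM i).1 _)
  have hwWnn : ∀ PW, 0 ≤ wW PW := fun PW => Finset.prod_nonneg (fun i _ => (hW i).1 _)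
  have htotM : ∑ PM : Fin n → Pref n, wM PM = 1 := by
    rw [hwM, ← Fintype.prod_sum]
    simp [(fun i => (hM i).2)]
  have htotW : ∑ PW : Fin n → Pref n, wW PW = 1 := by
    rw [hwW, ← Fintype.prod_sum]
    simp [(fun i => (hW i).2)]
  have htot : ∑ PM : Fin n → Pref n, ∑ PW : Fin n → Pref n, wM PM * wW PW = 1 := by
    simp only [← Finset.mul_sum, htotW, mul_one, htotM]
  -- stabProb = 1 ↔ all positive-weight profiles are stable
  have key : stabProb pM pW μ = 1 ↔
      ∀ PM PW : Fin n → Pref n, wM PM * wW PW ≠ 0 → stable μ PM PW := by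
    have hsplit : stabProb pM pW μ
        + (∑ PM : Fin n → Pref n, ∑ PW : Fin n → Pref n,
            if stable μ PM PW then 0 else wM PM * wW PW) = 1 := by
      rw [← htot]
      unfold stabProb
      rw [← Finset.sum_add_distrib]
      congr 1; funext PM
      rw [← Finset.sum_add_distrib]
      congr 1; funext PW
      by_cases h : stable μ PM PW <;> simp [h, hwM, hwW]
    constructor
    · intro h1 PM PW hne
      by_contra hns
      have hzero : (∑ PM : Fin n → Pref n, ∑ PW : Fin n → Pref n,
          if stable μ PM PW then 0 else wM PM * wW PW) = 0 := by linarith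
      have hnn : ∀ PM' ∈ (Finset.univ : Finset (Fin n → Pref n)),
          0 ≤ ∑ PW' : Fin n → Pref n, (if stable μ PM' PW' then 0 else wM PM' * wW PW') :=
        fun PM' _ => Finset.sum_nonneg fun PW' _ => by
          by_cases h : stable μ PM' PW' <;>
            simp [h, mul_nonneg (hwMnn PM') (hwWnn PW')]
      have h1' := (Finset.sum_eq_zero_iff_of_nonneg hnn).mp hzero PM (Finset.mem_univ _)
      have h2' := (Finset.sum_eq_zero_iff_of_nonneg (fun PW' _ => by
          by_cases h : stable μ PM PW' <;>
            simp [h, mul_nonneg (hwMnn PM) (hwWnn PW')])).mp h1' PW (Finset.mem_univ _)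
      rw [if_neg hns] at h2'
      exact hne h2'
    · intro h
      have hzero : (∑ PM : Fin n → Pref n, ∑ PW : Fin n → Pref n,
          if stable μ PM PW then 0 else wM PM * wW PW) = 0 := by
        apply Finset.sum_eq_zero; intro PM _
        apply Finset.sum_eq_zero; intro PW _
        by_cases hs : stable μ PM PW
        · simp [hs]
        · rw [if_neg hs]
          by_contra hne
          exact hs (h PM PW hne)
      linarith
  rw [key]
  constructor
  · -- all positive-weight profiles stable → no very weakly blocking pair
    rintro h ⟨m, w, hmw, hcm, hcw⟩
    -- get orders with positive prob violating the certain preference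
    have hsymm : μ.symm w ≠ m := fun h' => hmw (by rw [← h']; simp)
    obtain ⟨Pm, hPm, hPmlt⟩ : ∃ P : Pref n, pM m P ≠ 0 ∧ ¬ P (μ m) < P w := by
      by_contra hc
      push_neg at hc
      exact hcm ((certPrefers_iff _ (hM m) _ _).mpr hc)
    obtain ⟨Pw, hPw, hPwlt⟩ : ∃ P : Pref n, pW w P ≠ 0 ∧ ¬ P (μ.symm w) < P m := by
      by_contra hc
      push_neg at hc
      exact hcw ((certPrefers_iff _ (hW w) _ _).mpr hc)
    have hPm' : Pm w < Pm (μ m) := by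
      rcases lt_or_eq_of_le (not_lt.mp hPmlt) with h' | h'
      · exact h'
      · exact absurd (Pm.injective h') (Ne.symm hmw)
    have hPw' : Pw m < Pw (μ.symm w) := by
      rcases lt_or_eq_of_le (not_lt.mp hPwlt) with h' | h'
      · exact h'
      · exact absurd (Pw.injective h') (Ne.symm hsymm)
    -- every agent has some order with positive prob
    have hexM : ∀ i, ∃ P : Pref n, pM i P ≠ 0 := by
      intro i
      by_contra hc; push_neg at hc
      have := (hM i).2
      rw [Finset.sum_eq_zero (fun P _ => hc P)] at this
      norm_num at this
    have hexW : ∀ i, ∃ P : Pref n, pW i P ≠ 0 := by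
      intro i
      by_contra hc; push_neg at hc
      have := (hW i).2
      rw [Finset.sum_eq_zero (fun P _ => hc P)] at this
      norm_num at this
    classical
    set PM : Fin n → Pref n := fun i => if i = m then Pm else Classical.choose (hexM i) with hPM
    set PW : Fin n → Pref n := fun i => if i = w then Pw else Classical.choose (hexW i) with hPW
    have hwMpos : wM PM ≠ 0 := by
      rw [hwM]
      apply Finset.prod_ne_zero_iff.mpr
      intro i _
      by_cases hi : i = m
      · subst hi; simpa [hPM] using hPm
      · simpa [hPM, hi] using Classical.choose_spec (hexM i)
    have hwWpos : wW PW ≠ 0 := by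
      rw [hwW]
      apply Finset.prod_ne_zero_iff.mpr
      intro i _
      by_cases hi : i = w
      · subst hi; simpa [hPW] using hPw
      · simpa [hPW, hi] using Classical.choose_spec (hexW i)
    have hst := h PM PW (mul_ne_zero hwMpos hwWpos)
    exact hst m w ⟨hmw, by simpa [hPM] using hPm', by simpa [hPW] using hPw'⟩
  · -- no very weakly blocking pair → all positive-weight profiles stable
    intro h PM PW hne
    intro m w hb
    obtain ⟨hmw, hm, hw⟩ := hb
    apply h
    refine ⟨m, w, hmw, ?_, ?_⟩
    · intro hc
      have := (certPrefers_iff _ (hM m) _ _).mp hc (PM m) ?_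
      · exact absurd this (asymm hm)
      · intro hz
        apply hne
        have h0 : wM PM = 0 := Finset.prod_eq_zero (Finset.mem_univ m) hz
        show wM PM * wW PW = 0
        rw [h0, zero_mul]
    · intro hc
      have := (certPrefers_iff _ (hW w) _ _).mp hc (PW w) ?_
      · exact absurd this (asymm hw)
      · intro hz
        apply hne
        have h0 : wW PW = 0 := Finset.prod_eq_zero (Finset.mem_univ w) hz
        show wM PM * wW PW = 0
        rw [h0, mul_zero]
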